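/- Let n ≥ 2 and ω = exp(2πi/n). The one-magnon state |Ψ⟩ = ω̄ Σ_{r=1}^n ω^r σ_r^−|1⟩^{⊗n} equals the matrix product state Σ_{i_1,...,i_n ∈ {0,1}} tr(A_{i_1}···A_{i_n} X)|i_1···i_n⟩ with A_0 = |1⟩⟨0|, A_1 = |0⟩⟨0| + ω|1⟩⟨1|, and X = |0⟩⟨1|. -/
import Mathlib


noncomputable def ω (n : ℕ) : ℂ := Complex.exp (2 * Real.pi * Complex.I / n)

/-- The one-magnon state `|Ψ⟩ = ω̄ Σ_{r=1}^n ω^r σ_r⁻ |1⟩^{⊗n}`: the coefficient of the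
basis state with a single `0` at (`0`-based) site `r` is `ω^r`. -/
noncomputable def magnonPsi (n : ℕ) : (Fin n → Fin 2) → ℂ := fun x =>
  ∑ r : Fin n,
    ω n ^ (r : ℕ) * (if x = Function.update (fun _ => 1) r 0 then 1 else 0)

/-- The MPS tensors `A₀ = |1⟩⟨0|`, `A₁ = |0⟩⟨0| + ω|1⟩⟨1|`. -/
noncomputable def mpsA (n : ℕ) : Fin 2 → Matrix (Fin 2) (Fin 2) ℂ :=
  ![!![0, 0; 1, 0], !![1, 0; 0, ω n]]

/-- The boundary matrix `X = |0⟩⟨1|`. -/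
def mpsX : Matrix (Fin 2) (Fin 2) ℂ := !![0, 1; 0, 0]

/-- generalized tensors with arbitrary `c` in place of `ω n`. -/
noncomputable def Pc (c : ℂ) : Fin 2 → Matrix (Fin 2) (Fin 2) ℂ :=
  ![!![0, 0; 1, 0], !![1, 0; 0, c]]

lemma Pc0 (c : ℂ) : Pc c 0 = !![0, 0; 1, 0] := rfl
lemma Pc1 (c : ℂ) : Pc c 1 = !![1, 0; 0, c] := rfl

lemma fin2_cases (i : Fin 2) : i = 0 ∨ i = 1 := by omega

lemma upd_succ {n : ℕ} (r : Fin n) :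
    Function.update (fun _ : Fin (n+1) => (1 : Fin 2)) r.succ 0 =
      Fin.cons 1 (Function.update (fun _ : Fin n => (1 : Fin 2)) r 0) := by
  funext i
  refine Fin.cases ?_ (fun j => ?_) i
  · simp [Function.update_apply, (Fin.succ_ne_zero r).symm]
  · simp [Function.update_apply, Fin.succ_inj]

lemma upd_zero {n : ℕ} :
    Function.update (fun _ : Fin (n+1) => (1 : Fin 2)) 0 0 =
      Fin.cons 0 (fun _ : Fin n => (1 : Fin 2)) := by
  funext i
  refine Fin.cases ?_ (fun j => ?_) i
  · simp
  · simp [Function.update_apply, Fin.succ_ne_zero]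

lemma cons_iff {n : ℕ} (x : Fin (n+1) → Fin 2) (a : Fin 2) (g : Fin n → Fin 2) :
    x = Fin.cons a g ↔ x 0 = a ∧ (fun j => x j.succ) = g := by
  constructor
  · rintro rfl; simp
  · rintro ⟨h0, hs⟩
    funext i
    refine Fin.cases ?_ (fun j => ?_) i
    · simpa using h0
    · simpa using congrFun hs j

lemma key00 (c : ℂ) : ∀ n (x : Fin n → Fin 2),
    ((List.ofFn fun k => Pc c (x k)).prod) 0 0 = if ∀ r, x r = 1 then 1 else 0 := by
  intro n
  induction n with
  | zero => intro x; simp [Matrix.one_apply]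
  | succ n ih =>
    intro x
    rw [List.ofFn_succ, List.prod_cons]
    have hQ : ((List.ofFn fun i => Pc c (x i.succ)).prod) 0 0
        = if ∀ r : Fin n, x r.succ = 1 then 1 else 0 := ih fun j => x j.succ
    rcases fin2_cases (x 0) with h | h <;>
      simp [Matrix.mul_apply, Fin.sum_univ_two, h, Pc0, Pc1, Fin.forall_fin_succ, hQ]

lemma key10 (c : ℂ) : ∀ n (x : Fin n → Fin 2),
    ((List.ofFn fun k => Pc c (x k)).prod) 1 0 =
      ∑ r : Fin n, c ^ (r : ℕ) *
        (if x = Function.update (fun _ => 1) r 0 then 1 else 0) := by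
  intro n
  induction n with
  | zero => intro x; simp [Matrix.one_apply]
  | succ n ih =>
    intro x
    rw [List.ofFn_succ, List.prod_cons, Fin.sum_univ_succ]
    rcases fin2_cases (x 0) with h | h
    · -- x 0 = 0 : (A₀ * Q) 1 0 = Q 0 0
      have h1 : ∀ r : Fin n,
          (if x = Function.update (fun _ => 1) r.succ 0 then (1:ℂ) else 0) = 0 := by
        intro r
        rw [if_neg]
        rw [upd_succ, cons_iff]
        rintro ⟨h0, -⟩
        rw [h] at h0; exact absurd h0 (by decide)
      have h2' : (x = Function.update (fun _ => 1) (0 : Fin (n+1)) 0)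
          ↔ (∀ r : Fin n, x r.succ = 1) := by
        rw [upd_zero, cons_iff]
        simp [h, funext_iff]
      have h2 : (if x = Function.update (fun _ => 1) (0 : Fin (n+1)) 0 then (1:ℂ) else 0)
          = if ∀ r : Fin n, x r.succ = 1 then 1 else 0 := if_congr h2' rfl rfl
      have hQ : ((List.ofFn fun i => Pc c (x i.succ)).prod) 0 0
          = if ∀ r : Fin n, x r.succ = 1 then 1 else 0 := key00 c n fun j => x j.succ
      simp only [h1, mul_zero, Finset.sum_const_zero, add_zero, h2]
      simp [Matrix.mul_apply, Fin.sum_univ_two, h, Pc0, Pc1, hQ]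
    · -- x 0 = 1 : (A₁ * Q) 1 0 = c * Q 1 0
      have h1 : (if x = Function.update (fun _ => 1) (0 : Fin (n+1)) 0 then (1:ℂ) else 0) = 0 := by
        rw [if_neg]
        rw [upd_zero, cons_iff]
        rintro ⟨h0, -⟩
        rw [h] at h0; exact absurd h0 (by decide)
      have h2 : ∀ r : Fin n,
          (if x = Function.update (fun _ => 1) r.succ 0 then (1:ℂ) else 0) =
          (if (fun j => x j.succ) = Function.update (fun _ => 1) r 0 then (1:ℂ) else 0) := by
        intro r
        refine if_congr ?_ rfl rfl
        rw [upd_succ, cons_iff]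
        simp [h]
      have hQ : ((List.ofFn fun i => Pc c (x i.succ)).prod) 1 0 =
          ∑ r : Fin n, c ^ (r : ℕ) *
            (if (fun j => x j.succ) = Function.update (fun _ => 1) r 0 then (1:ℂ) else 0) :=
        ih fun j => x j.succ
      simp only [h1, mul_zero, zero_add, h2]
      simp only [Matrix.mul_apply, Fin.sum_univ_two, h, Pc0, Pc1, hQ]
      norm_num [Finset.mul_sum]
      refine Finset.sum_congr rfl fun r _ => by ring

/-- The one-magnon state equals the bond-dimension-2 matrix product state
`Σ_{i₁,…,i_n} tr(A_{i₁}⋯A_{i_n} X)|i₁⋯i_n⟩` with `A₀ = |1⟩⟨0|`,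
`A₁ = |0⟩⟨0| + ω|1⟩⟨1|`, and `X = |0⟩⟨1|`. -/
theorem magnon_eq_mps (n : ℕ) (hn : 2 ≤ n) :
    (fun x : Fin n → Fin 2 =>
        Matrix.trace ((List.ofFn fun k : Fin n => mpsA n (x k)).prod * mpsX)) =
      magnonPsi n := by
  funext x
  have hA : mpsA n = Pc (ω n) := rfl
  have htr : Matrix.trace ((List.ofFn fun k : Fin n => mpsA n (x k)).prod * mpsX) =
      ((List.ofFn fun k : Fin n => Pc (ω n) (x k)).prod) 1 0 := by
    rw [hA]
    simp [Matrix.trace, Matrix.mul_apply, mpsX, Fin.sum_univ_two, Matrix.diag]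
  rw [htr, key10, magnonPsi]
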